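/- Let (X, π) be a finite set with a partition, π̂_k the union of blocks of cardinality k, and r such that |π̂_r| ≥ |π̂_k| for all k. Then the maximum over all permutations α of X of the number of microstates with strictly decreasing entropy equals |X| − |π̂_r|. -/

import Mathlib

open Finset

/-- Upper bound: in every permutation, the number of non-decreases is at least
the cardinality of any zone. -/
lemma stmt13_upper {X : Type*} [Fintype X] (blk : X → ℕ) (r : ℕ) (α : Equiv.Perm X) :
    (univ.filter (fun i : X => blk i = r)).card ≤
      (univ.filter (fun i : X => ¬ blk (α i) < blk i)).card := by
  -- existence of a first non-decrease along every orbit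
  have hex : ∀ i : X, ∃ n : ℕ, ¬ blk ((α ^ (n + 1)) i) < blk ((α ^ n) i) := by
    intro i
    by_contra h
    push_neg at h
    have key : ∀ n, blk ((α ^ n) i) + n ≤ blk ((α ^ 0) i) := by
      intro n
      induction n with
      | zero => simp
      | succ n ih => have := h n; omega
    have := key (blk ((α ^ 0) i) + 1)
    omega
  -- strict decrease up to the first non-decrease
  have hdec : ∀ i : X, ∀ m, m ≤ Nat.find (hex i) → 0 < m →
      blk ((α ^ m) i) < blk i := by
    intro i m hm hpos
    induction m with
    | zero => omega
    | succ m ih =>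
      have hmin : blk ((α ^ (m + 1)) i) < blk ((α ^ m) i) := by
        by_contra hc
        have : Nat.find (hex i) ≤ m := Nat.find_le hc
        omega
      rcases Nat.eq_zero_or_pos m with hm0 | hm0
      · subst hm0; simpa using hmin
      · have := ih (by omega) hm0
        omega
  -- injection from the zone into the set of non-decreases
  apply Finset.card_le_card_of_injOn (fun i => (α ^ (Nat.find (hex i))) i)
  · intro i hi
    simp only [mem_filter, mem_univ, true_and]
    have hspec := Nat.find_spec (hex i)
    rw [pow_succ'] at hspec
    simpa using hspec
  · -- injectivity
    have key : ∀ i i' : X, blk i = r → blk i' = r →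
        Nat.find (hex i') ≤ Nat.find (hex i) →
        (α ^ (Nat.find (hex i))) i = (α ^ (Nat.find (hex i'))) i' → i = i' := by
      intro i i' hi hi' hle heq
      set n := Nat.find (hex i) with hn
      set n' := Nat.find (hex i') with hn'
      have hsplit : (α ^ n') ((α ^ (n - n')) i) = (α ^ n') i' := by
        rw [← Equiv.Perm.mul_apply, ← pow_add]
        rw [show n' + (n - n') = n by omega]
        exact heq
      have hii' : (α ^ (n - n')) i = i' := (Equiv.injective _) hsplit
      rcases Nat.eq_zero_or_pos (n - n') with h0 | h0
      · have : n = n' := by omega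
        rw [h0] at hii'
        simpa using hii'
      · have := hdec i (n - n') (by omega) h0
        rw [hii', hi, hi'] at this
        omega
    intro i hi i' hi' heq
    simp only [coe_filter, Set.mem_setOf_eq, mem_univ, true_and] at hi hi'
    rcases le_total (Nat.find (hex i')) (Nat.find (hex i)) with h | h
    · exact key i i' hi hi' h heq
    · exact (key i' i hi' hi h heq.symm).symm

/-- The maximum over all permutations of the number of strict entropy decreases
equals `|X| - |π̂_r|`, where `π̂_r` is a zone of maximal cardinality. -/
theorem stmt13 {X A : Type*} [Fintype X] [DecidableEq A]
    (f : X → A) (hf : Function.Surjective f)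
    (blk : X → ℕ) (hblk : ∀ i, blk i = (univ.filter (fun j => f j = f i)).card)
    (zone : ℕ → Finset X) (hzone : ∀ k, zone k = univ.filter (fun i => blk i = k))
    (r : ℕ) (hr : ∀ k, (zone k).card ≤ (zone r).card) :
    IsGreatest
      (Set.range fun α : Equiv.Perm X =>
        (univ.filter (fun i => blk (α i) < blk i)).card)
      (Fintype.card X - (zone r).card) := by
  classical
  set N := Fintype.card X with hN
  set C := (zone r).card with hC
  have hCN : C ≤ N := by
    rw [hC, hN, ← Finset.card_univ]
    exact Finset.card_le_card (by simp [hzone])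
  constructor
  · -- attainability
    -- sorted enumeration of X by block size
    obtain ⟨e⟩ : Nonempty (X ≃ Fin N) := ⟨Fintype.equivFin X⟩
    set g : Fin N → ℕ := fun p => blk (e.symm p) with hg
    set σ : Fin N ≃ X := (Tuple.sort g).trans e.symm with hσ
    have hmono : Monotone (fun p => blk (σ p)) := by
      have := Tuple.monotone_sort g
      exact this
    -- each value occurs at most C times, so positions C apart have different values
    have hstrict : ∀ (p : Fin N) (h : (p : ℕ) + C < N),
        blk (σ p) < blk (σ ⟨(p : ℕ) + C, h⟩) := by
      intro p h
      set q : Fin N := ⟨(p : ℕ) + C, h⟩ with hq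
      have hle : blk (σ p) ≤ blk (σ q) := hmono (by simp [hq, Fin.le_def])
      rcases lt_or_eq_of_le hle with h' | h'
      · exact h'
      -- equality: C+1 elements in one zone, contradiction
      exfalso
      have hsub : (Finset.Icc p q).image σ ⊆ zone (blk (σ p)) := by
        intro x hx
        simp only [mem_image, mem_Icc] at hx
        obtain ⟨y, ⟨hy1, hy2⟩, rfl⟩ := hx
        rw [hzone, mem_filter]
        refine ⟨mem_univ _, le_antisymm ?_ (hmono hy1)⟩
        rw [h']
        exact hmono hy2
      have hcard : ((Finset.Icc p q).image σ).card = C + 1 := by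
        rw [Finset.card_image_of_injective _ σ.injective, Fin.card_Icc]
        simp only [hq]
        omega
      have := Finset.card_le_card hsub
      have := hr (blk (σ p))
      omega
    -- the column-shift permutation on Fin N
    set down : Fin N → Fin N := fun p =>
      if h : (p : ℕ) + C < N then ⟨(p : ℕ) + C, h⟩
      else ⟨(p : ℕ) % C, lt_of_le_of_lt (Nat.mod_le _ _) p.isLt⟩ with hdown
    have hinj : Function.Injective down := by
      intro p q hpq
      simp only [hdown] at hpq
      split_ifs at hpq with h1 h2 h2 <;>
        rw [Fin.mk.injEq] at hpq
      · exact Fin.ext (by omega)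
      · have hCpos : 0 < C := by have := q.isLt; omega
        have := Nat.mod_lt (q : ℕ) hCpos
        omega
      · have hCpos : 0 < C := by have := p.isLt; omega
        have := Nat.mod_lt (p : ℕ) hCpos
        omega
      · have hCpos : 0 < C := by have := p.isLt; omega
        have hp := p.isLt
        have hq := q.isLt
        -- p ≡ q mod C, both in [N-C, N), hence equal
        rcases le_total (p : ℕ) (q : ℕ) with hle | hle
        · have hmod : (p : ℕ) % C = (q : ℕ) % C := hpq
          have hdvd : C ∣ (q : ℕ) - (p : ℕ) :=
            (Nat.modEq_iff_dvd' hle).mp hmod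
          have := Nat.eq_zero_of_dvd_of_lt hdvd
          rcases Nat.eq_zero_or_pos ((q : ℕ) - (p : ℕ)) with h0 | h0
          · exact Fin.ext (by omega)
          · exact absurd (this (by omega)) (by omega)
        · have hmod : (q : ℕ) % C = (p : ℕ) % C := hpq.symm
          have hdvd : C ∣ (p : ℕ) - (q : ℕ) :=
            (Nat.modEq_iff_dvd' hle).mp hmod
          have := Nat.eq_zero_of_dvd_of_lt hdvd
          rcases Nat.eq_zero_or_pos ((p : ℕ) - (q : ℕ)) with h0 | h0
          · exact Fin.ext (by omega)
          · exact absurd (this (by omega)) (by omega)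
    set downE : Fin N ≃ Fin N :=
      Equiv.ofBijective down ((Finite.injective_iff_bijective).mp hinj) with hdownE
    set β : Equiv.Perm X := σ.symm.trans (downE.trans σ) with hβ
    refine ⟨β.symm, ?_⟩
    show (univ.filter (fun i => blk (β.symm i) < blk i)).card = N - C
    have hcount : (univ.filter (fun i => blk (β.symm i) < blk i)).card =
        (univ.filter (fun p : Fin N => blk (σ p) < blk (σ (down p)))).card := by
      refine (Finset.card_equiv (downE.trans σ) ?_).symm
      intro p
      simp only [mem_filter, mem_univ, true_and, Equiv.trans_apply]
      have h1 : downE p = down p := rfl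
      have h2 : β.symm (σ (downE p)) = σ p := by
        rw [hβ]
        simp
      rw [h1] at h2
      rw [h1, h2]
    rw [hcount]
    have hfilter : (univ.filter (fun p : Fin N => blk (σ p) < blk (σ (down p)))) =
        (univ.filter (fun p : Fin N => (p : ℕ) + C < N)) := by
      ext p
      simp only [mem_filter, mem_univ, true_and, hdown]
      split_ifs with h
      · simp only [h, iff_true]
        exact hstrict p h
      · simp only [h, iff_false, not_lt]
        exact hmono (show ((⟨(p : ℕ) % C, _⟩ : Fin N)) ≤ p by
          simp [Fin.le_def, Nat.mod_le])
    rw [hfilter]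
    -- count indices with p + C < N
    rw [show (Fintype.card X - (zone r).card) = N - C from rfl,
      show N - C = (Finset.range (N - C)).card by rw [Finset.card_range]]
    refine Finset.card_bij (fun p _ => (p : ℕ)) ?_ ?_ ?_
    · intro p hp
      simp only [mem_filter, mem_univ, true_and] at hp
      simp only [Finset.mem_range]
      omega
    · intro p _ q _ h
      exact Fin.ext h
    · intro m hm
      simp only [Finset.mem_range] at hm
      exact ⟨⟨m, by omega⟩, by simp; omega, rfl⟩
  · -- upper bound
    rintro x ⟨α, rfl⟩
    show (univ.filter (fun i => blk (α i) < blk i)).card ≤ N - C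
    have hsum := Finset.card_filter_add_card_filter_not
      (s := (univ : Finset X)) (p := fun i => blk (α i) < blk i)
    have hub := stmt13_upper blk r α
    rw [← hzone r] at hub
    simp only [Finset.card_univ] at hsum
    omega
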